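/- Suppose the C¹ fields u, B, ρ, S, T, h, Φ satisfy: momentum du/dt = T∇S − ∇h + ((∇×B̃)×B)/(μ₀ρ) − ∇Φ where B̃ = B(1 − μ₀ p_Δ/|B|²); Faraday ∂_t B − B·∇u + u·∇B + (∇·u)B = 0; and ∇·B = 0. Then the cross-helicity density satisfies ∂_t(u·B) + ∇·( (u·B)u + (Φ + h − |u|²/2)B ) = T (B·∇S). -/

import Mathlib

open scoped BigOperators

noncomputable section

/-- Space: ℝ³ as functions `Fin 3 → ℝ`. -/
abbrev V3 := Fin 3 → ℝ

/-- Partial derivative of a scalar field in the `i`-th coordinate direction. -/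
def pd (i : Fin 3) (f : V3 → ℝ) (x : V3) : ℝ := fderiv ℝ f x (Pi.single i 1)

/-- Euclidean dot product on ℝ³. -/
def dot3 (a b : V3) : ℝ := ∑ i, a i * b i

/-- Cross product on ℝ³. -/
def cross3 (a b : V3) : V3 :=
  ![a 1 * b 2 - a 2 * b 1, a 2 * b 0 - a 0 * b 2, a 0 * b 1 - a 1 * b 0]

/-- Divergence of a vector field on ℝ³. -/
def div3 (F : V3 → V3) (x : V3) : ℝ := ∑ i, pd i (fun y => F y i) x

/-- Curl of a vector field on ℝ³. -/
def curl3 (F : V3 → V3) (x : V3) : V3 :=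
  ![pd 1 (fun y => F y 2) x - pd 2 (fun y => F y 1) x,
    pd 2 (fun y => F y 0) x - pd 0 (fun y => F y 2) x,
    pd 0 (fun y => F y 1) x - pd 1 (fun y => F y 0) x]

/-- Gradient of a scalar field on ℝ³. -/
def grad3 (f : V3 → ℝ) (x : V3) : V3 := fun i => pd i f x

/-- Euclidean norm on ℝ³. -/
def norm3 (a : V3) : ℝ := Real.sqrt (dot3 a a)

def C1Scalar (f : V3 → ℝ → ℝ) : Prop := ContDiff ℝ 1 (fun p : V3 × ℝ => f p.1 p.2)

def C1Vector (F : V3 → ℝ → V3) : Prop := ContDiff ℝ 1 (fun p : V3 × ℝ => F p.1 p.2)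

/- ### Auxiliary lemmas -/

lemma pd_add' {f g : V3 → ℝ} {x : V3} (i : Fin 3)
    (hf : DifferentiableAt ℝ f x) (hg : DifferentiableAt ℝ g x) :
    pd i (fun y => f y + g y) x = pd i f x + pd i g x := by
  simp [pd, fderiv_fun_add hf hg]

lemma pd_sub' {f g : V3 → ℝ} {x : V3} (i : Fin 3)
    (hf : DifferentiableAt ℝ f x) (hg : DifferentiableAt ℝ g x) :
    pd i (fun y => f y - g y) x = pd i f x - pd i g x := by
  simp [pd, fderiv_fun_sub hf hg]

lemma pd_mul' {f g : V3 → ℝ} {x : V3} (i : Fin 3)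
    (hf : DifferentiableAt ℝ f x) (hg : DifferentiableAt ℝ g x) :
    pd i (fun y => f y * g y) x = f x * pd i g x + g x * pd i f x := by
  simp [pd, fderiv_fun_mul hf hg]

lemma pd_sum' {f : Fin 3 → V3 → ℝ} {x : V3} (i : Fin 3)
    (hf : ∀ j, DifferentiableAt ℝ (f j) x) :
    pd i (fun y => ∑ j, f j y) x = ∑ j, pd i (f j) x := by
  simp [pd, fderiv_fun_sum (fun j _ => hf j)]

lemma pd_div_const' {f : V3 → ℝ} {x : V3} (i : Fin 3) (c : ℝ)
    (hf : DifferentiableAt ℝ f x) :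
    pd i (fun y => f y / c) x = pd i f x / c := by
  simp only [div_eq_mul_inv, pd, fderiv_mul_const hf]
  simp [mul_comm]

/-- Cross-helicity transport from the thermodynamic (Euler–Poincaré) form of
the CGL momentum equation, Faraday's equation and Gauss's law:
`∂ₜ(u·B) + ∇·((u·B)u + (Φ + h − u²/2)B) = T (B·∇S)`. -/
theorem cross_helicity_transport_from_momentum
    (u B : V3 → ℝ → V3) (ρ S T h Φ pΔ : V3 → ℝ → ℝ) (μ₀ : ℝ)
    (hμ₀ : 0 < μ₀)
    (hu : C1Vector u) (hB : C1Vector B)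
    (hρ : C1Scalar ρ) (hS : C1Scalar S) (hT : C1Scalar T)
    (hh : C1Scalar h) (hΦ : C1Scalar Φ) (hpΔ : C1Scalar pΔ)
    (hρpos : ∀ x t, 0 < ρ x t) (hBpos : ∀ x t, 0 < norm3 (B x t))
    (hMomentum : ∀ (x : V3) (t : ℝ) (i : Fin 3),
      deriv (fun s => u x s i) t + ∑ j, u x t j * pd j (fun y => u y t i) x
        = T x t * pd i (fun y => S y t) x
          - pd i (fun y => h y t) x
          + cross3
              (curl3 (fun y => (1 - μ₀ * pΔ y t / (norm3 (B y t)) ^ 2) • B y t) x)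
              (B x t) i / (μ₀ * ρ x t)
          - pd i (fun y => Φ y t) x)
    (hFaraday : ∀ (x : V3) (t : ℝ) (i : Fin 3),
      deriv (fun s => B x s i) t
        - ∑ j, B x t j * pd j (fun y => u y t i) x
        + ∑ j, u x t j * pd j (fun y => B y t i) x
        + div3 (fun y => u y t) x * B x t i = 0)
    (hGauss : ∀ (x : V3) (t : ℝ), div3 (fun y => B y t) x = 0) :
    ∀ (x : V3) (t : ℝ),
      deriv (fun s => dot3 (u x s) (B x s)) t
        + div3 (fun y =>
            (dot3 (u y t) (B y t)) • u y t
              + (Φ y t + h y t - dot3 (u y t) (u y t) / 2) • B y t) x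
      = T x t * dot3 (B x t) (grad3 (fun y => S y t) x) := by
  intro x t
  -- basic differentiability facts
  have huu : Differentiable ℝ (fun p : V3 × ℝ => u p.1 p.2) := hu.differentiable one_ne_zero
  have hBB : Differentiable ℝ (fun p : V3 × ℝ => B p.1 p.2) := hB.differentiable one_ne_zero
  have hut : ∀ i : Fin 3, DifferentiableAt ℝ (fun s => u x s i) t := fun i =>
    (((ContinuousLinearMap.proj i : V3 →L[ℝ] ℝ).differentiable.comp huu).comp
      ((differentiable_const x).prodMk differentiable_id)).differentiableAt
  have hBt : ∀ i : Fin 3, DifferentiableAt ℝ (fun s => B x s i) t := fun i =>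
    (((ContinuousLinearMap.proj i : V3 →L[ℝ] ℝ).differentiable.comp hBB).comp
      ((differentiable_const x).prodMk differentiable_id)).differentiableAt
  have hU : ∀ j : Fin 3, DifferentiableAt ℝ (fun y => u y t j) x := fun j =>
    (((ContinuousLinearMap.proj j : V3 →L[ℝ] ℝ).differentiable.comp huu).comp
      (differentiable_id.prodMk (differentiable_const t))).differentiableAt
  have hBx : ∀ j : Fin 3, DifferentiableAt ℝ (fun y => B y t j) x := fun j =>
    (((ContinuousLinearMap.proj j : V3 →L[ℝ] ℝ).differentiable.comp hBB).comp
      (differentiable_id.prodMk (differentiable_const t))).differentiableAt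
  have hΦx : DifferentiableAt ℝ (fun y => Φ y t) x :=
    ((hΦ.differentiable one_ne_zero).comp
      (differentiable_id.prodMk (differentiable_const t))).differentiableAt
  have hhx : DifferentiableAt ℝ (fun y => h y t) x :=
    ((hh.differentiable one_ne_zero).comp
      (differentiable_id.prodMk (differentiable_const t))).differentiableAt
  -- composite differentiability
  have huB : DifferentiableAt ℝ (fun y => ∑ j, u y t j * B y t j) x :=
    DifferentiableAt.fun_sum (fun j _ => (hU j).mul (hBx j))
  have huu2 : DifferentiableAt ℝ (fun y => ∑ j, u y t j * u y t j) x :=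
    DifferentiableAt.fun_sum (fun j _ => (hU j).mul (hU j))
  -- time derivative
  have hdt : deriv (fun s => dot3 (u x s) (B x s)) t
      = ∑ i, (deriv (fun s => u x s i) t * B x t i + u x t i * deriv (fun s => B x s i) t) := by
    have h1 : HasDerivAt (fun s => ∑ i, u x s i * B x s i)
        (∑ i, (deriv (fun s => u x s i) t * B x t i + u x t i * deriv (fun s => B x s i) t))
        t := HasDerivAt.fun_sum (fun i _ => ((hut i).hasDerivAt.mul (hBt i).hasDerivAt))
    exact h1.deriv
  -- divergence of the flux
  have hdiv : div3 (fun y =>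
        (dot3 (u y t) (B y t)) • u y t
          + (Φ y t + h y t - dot3 (u y t) (u y t) / 2) • B y t) x
      = ∑ i, ((∑ j, u x t j * B x t j) * pd i (fun y => u y t i) x
          + u x t i * (∑ j, (u x t j * pd i (fun y => B y t j) x
              + B x t j * pd i (fun y => u y t j) x))
          + ((Φ x t + h x t - (∑ j, u x t j * u x t j) / 2) * pd i (fun y => B y t i) x
            + B x t i * ((pd i (fun y => Φ y t) x + pd i (fun y => h y t) x)
                - (∑ j, (u x t j * pd i (fun y => u y t j) x
                    + u x t j * pd i (fun y => u y t j) x)) / 2))) := by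
    unfold div3
    refine Finset.sum_congr rfl (fun i _ => ?_)
    have e1 : (fun y => ((dot3 (u y t) (B y t)) • u y t
          + (Φ y t + h y t - dot3 (u y t) (u y t) / 2) • B y t) i)
        = fun y => (∑ j, u y t j * B y t j) * u y t i
            + (Φ y t + h y t - (∑ j, u y t j * u y t j) / 2) * B y t i := by
      funext y
      simp [dot3, Pi.add_apply, Pi.smul_apply, smul_eq_mul]
    rw [e1]
    have d2 : DifferentiableAt ℝ (fun y => Φ y t + h y t) x := hΦx.add hhx
    have d3 : DifferentiableAt ℝ (fun y => (∑ j, u y t j * u y t j) / 2) x := by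
      simp only [div_eq_mul_inv]; exact huu2.mul_const _
    rw [pd_add' i (huB.fun_mul (hU i)) ((d2.fun_sub d3).fun_mul (hBx i)),
        pd_mul' i huB (hU i), pd_mul' i (d2.fun_sub d3) (hBx i),
        pd_sub' i d2 d3, pd_add' i hΦx hhx, pd_div_const' i 2 huu2]
    rw [pd_sum' i (fun j => (hU j).fun_mul (hBx j)), pd_sum' i (fun j => (hU j).fun_mul (hU j))]
    have s1 : ∑ j : Fin 3, pd i (fun y => u y t j * B y t j) x
        = ∑ j : Fin 3, (u x t j * pd i (fun y => B y t j) x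
            + B x t j * pd i (fun y => u y t j) x) :=
      Finset.sum_congr rfl fun j _ => pd_mul' i (hU j) (hBx j)
    have s2 : ∑ j : Fin 3, pd i (fun y => u y t j * u y t j) x
        = ∑ j : Fin 3, (u x t j * pd i (fun y => u y t j) x
            + u x t j * pd i (fun y => u y t j) x) :=
      Finset.sum_congr rfl fun j _ => pd_mul' i (hU j) (hU j)
    rw [s1, s2]
  -- momentum, rearranged
  have hMom' : ∀ i : Fin 3, deriv (fun s => u x s i) t
      = T x t * pd i (fun y => S y t) x
          - pd i (fun y => h y t) x
          + cross3
              (curl3 (fun y => (1 - μ₀ * pΔ y t / (norm3 (B y t)) ^ 2) • B y t) x)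
              (B x t) i / (μ₀ * ρ x t)
          - pd i (fun y => Φ y t) x
          - ∑ j, u x t j * pd j (fun y => u y t i) x := by
    intro i
    have := hMomentum x t i
    linarith
  -- Faraday, rearranged
  have hFar' : ∀ i : Fin 3, deriv (fun s => B x s i) t
      = ∑ j, B x t j * pd j (fun y => u y t i) x
        - ∑ j, u x t j * pd j (fun y => B y t i) x
        - div3 (fun y => u y t) x * B x t i := by
    intro i
    have := hFaraday x t i
    linarith
  have hG := hGauss x t
  simp only [div3, Fin.sum_univ_three] at hG
  rw [hdt, hdiv]
  simp only [hMom', hFar']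
  simp only [dot3, grad3, div3, cross3, curl3, Fin.sum_univ_three,
    Matrix.cons_val_zero, Matrix.cons_val_one, Matrix.head_cons,
    Matrix.cons_val_two, Matrix.tail_cons]
  linear_combination (Φ x t + h x t
      - (u x t 0 * u x t 0 + u x t 1 * u x t 1 + u x t 2 * u x t 2) / 2) * hG
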